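/- Suppose H ≤ PL₊(I) is generated by a finite set Z of nice generators. Let Y be the set of elements h ∈ Z whose orbital A_h is maximal (contained in no other orbital of an element of Z), and for h ∈ Y let P_h = {h' ∈ Z : A_{h'} ⊊ A_h}. Then H decomposes as the direct sum over h ∈ Y of the subgroups ⟨h, P_h⟩, and each ⟨h, P_h⟩ is isomorphic to the wreath product ⟨P_h⟩ ≀ ℤ, with ⟨h, P_h⟩ equal to the internal extension (⊕_{j∈ℤ} ⟨P_h⟩^{h^j}) ⋊ ⟨h⟩ inside H. -/

import Mathlib

open Set

namespace PLPaper

/-- We model `PL₊(I)` inside the group of bijections of `ℝ` with *opposite*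
composition, so that the group acts on `ℝ` on the right:
`x · (g * h) = (x · g) · h`. -/
abbrev PermR : Type := (Equiv.Perm ℝ)ᵐᵒᵖ

/-- The (right) action of `g` on the point `x`. -/
def ap (g : PermR) (x : ℝ) : ℝ := g.unop x

/-- `g` is affine on a neighbourhood of `x`. -/
def IsLocallyAffineAt (g : PermR) (x : ℝ) : Prop :=
  ∃ m b : ℝ, ∀ᶠ y in nhds x, ap g y = m * y + b

/-- The breakpoints of `g`: points of `(0,1)` where `g` is not locally affine
(equivalently, for a PL map, where the derivative fails to exist). -/
def Breakpoints (g : PermR) : Set ℝ :=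
  {x ∈ Ioo (0:ℝ) 1 | ¬ IsLocallyAffineAt g x}

/-- `g` is an orientation-preserving piecewise-linear homeomorphism of `[0,1]`
(extended by the identity to all of `ℝ`), with finitely many breakpoints. -/
def IsPL (g : PermR) : Prop :=
  StrictMono (ap g) ∧ (∀ x ∉ Ioo (0:ℝ) 1, ap g x = x) ∧ (Breakpoints g).Finite

/-- The support of `g`. -/
def Supp (g : PermR) : Set ℝ := {x | ap g x ≠ x}

/-- `(a,b)` is an orbital of `g`, i.e. a connected component of `Supp g`. -/
def IsOrbital (g : PermR) (a b : ℝ) : Prop :=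
  a < b ∧ Ioo a b ⊆ Supp g ∧ a ∉ Supp g ∧ b ∉ Supp g

/-- The support of a subgroup `G`. -/
def GSupp (G : Subgroup PermR) : Set ℝ := ⋃ g ∈ (G : Set PermR), Supp g

/-- `(a,b)` is an orbital of the group `G`, i.e. a connected component of its support. -/
def IsGroupOrbital (G : Subgroup PermR) (a b : ℝ) : Prop :=
  a < b ∧ Ioo a b ⊆ GSupp G ∧ a ∉ GSupp G ∧ b ∉ GSupp G

/-- The pair `g, h` carries a transition chain: orbitals `(a,b)` of `g` and
`(c,d)` of `h` with `a < c < b < d`. -/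
def ElemsTransitionChain (g h : PermR) : Prop :=
  ∃ a b c d : ℝ, IsOrbital g a b ∧ IsOrbital h c d ∧ a < c ∧ c < b ∧ b < d

/-- The pair `g, h` carries a one-sided overlap: orbitals `(a,b)` of `g` and
`(a,c)` of `h`, or `(a,b)` of `g` and `(c,b)` of `h`, where `a < c < b`. -/
def ElemsOneSidedOverlap (g h : PermR) : Prop :=
  ∃ a b c : ℝ, a < c ∧ c < b ∧
    ((IsOrbital g a b ∧ IsOrbital h a c) ∨ (IsOrbital g a b ∧ IsOrbital h c b))

def AdmitsTransitionChain (G : Subgroup PermR) : Prop :=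
  ∃ g ∈ G, ∃ h ∈ G, ElemsTransitionChain g h

def AdmitsOneSidedOverlap (G : Subgroup PermR) : Prop :=
  ∃ g ∈ G, ∃ h ∈ G, ElemsOneSidedOverlap g h

/-- `G` admits a bad overlap: orbitals `A` of `f ∈ G` and `B` of `g ∈ G` which
intersect, are distinct, and neither closure is contained in the other orbital. -/
def AdmitsBadOverlap (G : Subgroup PermR) : Prop :=
  ∃ f ∈ G, ∃ g ∈ G, ∃ a b c d : ℝ, IsOrbital f a b ∧ IsOrbital g c d ∧
    (Ioo a b ∩ Ioo c d).Nonempty ∧ Ioo a b ≠ Ioo c d ∧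
    ¬ Icc a b ⊆ Ioo c d ∧ ¬ Icc c d ⊆ Ioo a b

/-- A tower: a set of signed orbitals `((a,b), g)` with pairwise nested orbitals,
where equal orbitals force equal signatures. -/
def IsTower (T : Set ((ℝ × ℝ) × PermR)) : Prop :=
  (∀ p ∈ T, IsOrbital p.2 p.1.1 p.1.2) ∧
  (∀ p ∈ T, ∀ q ∈ T,
      Ioo p.1.1 p.1.2 ⊆ Ioo q.1.1 q.1.2 ∨ Ioo q.1.1 q.1.2 ⊆ Ioo p.1.1 p.1.2) ∧
  (∀ p ∈ T, ∀ q ∈ T, p.1 = q.1 → p.2 = q.2)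

/-- `G` admits the tower `T` if `T` is a tower all of whose signatures lie in `G`. -/
def AdmitsTower (G : Subgroup PermR) (T : Set ((ℝ × ℝ) × PermR)) : Prop :=
  IsTower T ∧ ∀ p ∈ T, p.2 ∈ G

def AdmitsInfiniteTower (G : Subgroup PermR) : Prop :=
  ∃ T : Set ((ℝ × ℝ) × PermR), AdmitsTower G T ∧ T.Infinite

/-- The set of breakpoints of the elements of a set `S`. -/
def BreakSet (S : Set PermR) : Set ℝ := ⋃ g ∈ S, Breakpoints g

/-- The derived length of a group: the least `n` with `derivedSeries G n = ⊥`. -/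
noncomputable def derivedLength (G : Type*) [Group G] : ℕ :=
  sInf {n : ℕ | derivedSeries G n = ⊥}

/-- `Z` is a set of nice generators:
(Z0) each `h ∈ Z` has exactly one orbital;
(Z1) no pair of elements of `Z` forms a transition chain or a one-sided overlap;
(Z2) distinct elements of `Z` have distinct orbitals;
(Z3) for each `h ∈ Z` there is `r ∈ A_h` such that every orbital of an element
of `Z` properly contained in `A_h` is contained in `(r, r·h)`. -/
def IsNiceSet (Z : Set PermR) : Prop :=
  (∀ h ∈ Z, (∃ a b : ℝ, IsOrbital h a b) ∧
    ∀ a b a' b' : ℝ, IsOrbital h a b → IsOrbital h a' b' → a = a' ∧ b = b') ∧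
  (∀ g ∈ Z, ∀ h ∈ Z, ¬ ElemsTransitionChain g h ∧ ¬ ElemsOneSidedOverlap g h) ∧
  (∀ g ∈ Z, ∀ h ∈ Z, g ≠ h → ∀ a b : ℝ, IsOrbital g a b → ¬ IsOrbital h a b) ∧
  (∀ h ∈ Z, ∀ a b : ℝ, IsOrbital h a b → ∃ r ∈ Ioo a b,
    ∀ h' ∈ Z, ∀ a' b' : ℝ, IsOrbital h' a' b' → Ioo a' b' ⊂ Ioo a b →
      Ioo a' b' ⊆ Ioo r (ap h r))

/-- The conjugate subgroup `K^g = g⁻¹ K g`. -/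
def ConjSG (K : Subgroup PermR) (g : PermR) : Subgroup PermR :=
  K.map (MulAut.conj g⁻¹).toMonoidHom

/-- The elements of `Z` whose (unique) orbital is maximal among orbitals of
elements of `Z`. -/
def YSet (Z : Set PermR) : Set PermR :=
  {h | h ∈ Z ∧ ∀ a b : ℝ, IsOrbital h a b → ∀ h' ∈ Z, ∀ a' b' : ℝ,
    IsOrbital h' a' b' → ¬ (Ioo a b ⊂ Ioo a' b')}

/-- `P_h`: the elements of `Z` whose orbital is properly contained in the orbital of `h`. -/
def PSet (Z : Set PermR) (h : PermR) : Set PermR :=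
  {h' | h' ∈ Z ∧ ∃ a b a' b' : ℝ, IsOrbital h a b ∧ IsOrbital h' a' b' ∧
    Ioo a' b' ⊂ Ioo a b}

/-- `⟨P_h⟩`. -/
def KSub (Z : Set PermR) (h : PermR) : Subgroup PermR := Subgroup.closure (PSet Z h)

/-- `⟨h, P_h⟩`. -/
def WSub (Z : Set PermR) (h : PermR) : Subgroup PermR :=
  Subgroup.closure ({h} ∪ PSet Z h)

/-- `⊕_{j ∈ ℤ} ⟨P_h⟩^{h^j}` (as an internal supremum of conjugate subgroups). -/
def NSub (Z : Set PermR) (h : PermR) : Subgroup PermR :=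
  ⨆ j : ℤ, ConjSG (KSub Z h) (h ^ j)


-- ===================== auxiliary lemmas =====================

lemma ap_mul (g h : PermR) (x : ℝ) : ap (g * h) x = ap h (ap g x) := rfl
lemma ap_one_apply (x : ℝ) : ap 1 x = x := rfl
lemma ap_inv_ap (g : PermR) (x : ℝ) : ap g⁻¹ (ap g x) = x := g.unop.symm_apply_apply x
lemma ap_ap_inv (g : PermR) (x : ℝ) : ap g (ap g⁻¹ x) = x := g.unop.apply_symm_apply x
lemma ap_injective (g : PermR) : Function.Injective (ap g) := g.unop.injective
lemma eq_one_of_fixes {g : PermR} (h : ∀ x, ap g x = x) : g = 1 :=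
  MulOpposite.unop_injective (Equiv.ext h)
lemma ap_zpow_succ (h : PermR) (j : ℤ) (x : ℝ) :
    ap (h ^ (j + 1)) x = ap h (ap (h ^ j) x) := by
  rw [ap, ap, ap, MulOpposite.unop_zpow, MulOpposite.unop_zpow, add_comm, zpow_add,
    zpow_one, Equiv.Perm.mul_apply]
lemma ap_zpow_succ' (h : PermR) (j : ℤ) (x : ℝ) :
    ap (h ^ (j + 1)) x = ap (h ^ j) (ap h x) := by
  rw [ap, ap, ap, MulOpposite.unop_zpow, MulOpposite.unop_zpow, zpow_add,
    zpow_one, Equiv.Perm.mul_apply]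
lemma supp_one : Supp (1 : PermR) = ∅ := by ext x; simp [Supp, ap_one_apply]
lemma supp_inv (g : PermR) : Supp g⁻¹ = Supp g := by
  ext x
  simp only [Supp, mem_setOf_eq, not_iff_not]
  constructor
  · intro hx; conv_lhs => rw [← hx]
    rw [ap_ap_inv]
  · intro hx; conv_lhs => rw [← hx]
    rw [ap_inv_ap]
lemma supp_mul_subset (g h : PermR) : Supp (g * h) ⊆ Supp g ∪ Supp h := by
  intro x hx
  by_contra hc
  simp only [mem_union, not_or, Supp, mem_setOf_eq, not_not] at hc
  exact hx (by rw [ap_mul, hc.1, hc.2])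
lemma ap_mem_supp {g : PermR} {x : ℝ} (hx : x ∈ Supp g) : ap g x ∈ Supp g := by
  intro hc
  exact hx (ap_injective g hc)

/-- The subgroup of elements supported inside `S`. -/
def SuppSub (S : Set ℝ) : Subgroup PermR where
  carrier := {g | Supp g ⊆ S}
  one_mem' := by simp [supp_one]
  mul_mem' := fun {a b} ha hb => (supp_mul_subset a b).trans (union_subset ha hb)
  inv_mem' := fun {a} ha => by simpa [supp_inv] using ha

lemma mem_suppSub {S : Set ℝ} {g : PermR} : g ∈ SuppSub S ↔ Supp g ⊆ S := Iff.rfl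
lemma suppSub_mono {S T : Set ℝ} (h : S ⊆ T) : SuppSub S ≤ SuppSub T :=
  fun _ hg => mem_suppSub.2 ((mem_suppSub.1 hg).trans h)

lemma commute_of_disjoint_supp {g h : PermR} (hd : Supp g ∩ Supp h = ∅) :
    Commute g h := by
  have key : ∀ x, ap (g * h) x = ap (h * g) x := by
    intro x
    rw [ap_mul, ap_mul]
    have hdn : ∀ y, y ∈ Supp g → y ∉ Supp h := by
      intro y hy hz; exact absurd (mem_inter hy hz) (by rw [hd]; exact notMem_empty y)
    by_cases hxg : x ∈ Supp g
    · have h1 : ap h x = x := not_not.mp (hdn x hxg)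
      have h2 : ap h (ap g x) = ap g x := not_not.mp (hdn _ (ap_mem_supp hxg))
      rw [h1, h2]
    · have h1 : ap g x = x := not_not.mp hxg
      by_cases hxh : x ∈ Supp h
      · have h2 : ap g (ap h x) = ap h x := by
          by_contra hc
          exact hdn _ hc (ap_mem_supp hxh)
        rw [h1, h2]
      · rw [h1, not_not.mp hxh, h1]
  exact MulOpposite.unop_injective (Equiv.ext key)

lemma continuous_ap {g : PermR} (hm : StrictMono (ap g)) : Continuous (ap g) :=
  (StrictMono.orderIsoOfSurjective (ap g) hm g.unop.surjective).continuous

lemma Ioo_eq_endpoints {a b c d : ℝ} (h : Ioo a b = Ioo c d) (hab : a < b) :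
    a = c ∧ b = d := by
  have hcd : c < d := by
    rcases nonempty_Ioo.2 hab with ⟨t, ht⟩
    rw [h] at ht; exact lt_trans ht.1 ht.2
  have key : ∀ a b c d : ℝ, Ioo a b = Ioo c d → a < b → c < d → ¬ c < a := by
    intro a b c d h hab hcd hca
    have ht : (c + min a d) / 2 ∈ Ioo c d := by
      constructor
      · have : c < min a d := lt_min hca hcd
        linarith
      · have h1 : min a d ≤ d := min_le_right _ _
        have : c < min a d := lt_min hca hcd
        linarith
    rw [← h] at ht
    have : (c + min a d) / 2 < a := by
      have h1 : min a d ≤ a := min_le_left _ _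
      have : c < min a d := lt_min hca hcd
      linarith
    linarith [ht.1]
  have h1 : ¬ c < a := key a b c d h hab hcd
  have h2 : ¬ a < c := key c d a b h.symm hcd hab
  have hac : a = c := le_antisymm (not_lt.1 h1) (not_lt.1 h2)
  have key2 : ∀ a b c d : ℝ, Ioo a b = Ioo c d → a < b → c < d → a = c → ¬ b < d := by
    intro a b c d h hab hcd hac hbd
    have ht : (max c b + d) / 2 ∈ Ioo c d := by
      constructor
      · have h1 : c ≤ max c b := le_max_left _ _
        have : max c b < d := max_lt hcd hbd
        linarith
      · have : max c b < d := max_lt hcd hbd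
        linarith
    rw [← h] at ht
    have : b ≤ (max c b + d) / 2 := by
      have h1 : b ≤ max c b := le_max_right _ _
      have : max c b < d := max_lt hcd hbd
      linarith
    linarith [ht.2]
  have h3 : ¬ b < d := key2 a b c d h hab hcd hac
  have h4 : ¬ d < b := key2 c d a b h.symm hcd hab hac.symm
  exact ⟨hac, le_antisymm (not_lt.1 h4) (not_lt.1 h3)⟩

lemma Ioo_ssubset_strict {a b c d : ℝ} (hab : a < b) (h1 : c < a) (h2 : b < d) :
    Ioo a b ⊂ Ioo c d :=
  lt_of_le_of_ne (Ioo_subset_Ioo h1.le h2.le)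
    (fun he => h1.ne (Ioo_eq_endpoints he hab).1.symm)

lemma supp_subset_orbital {g : PermR} (hpl : IsPL g) {a b : ℝ}
    (hab : IsOrbital g a b)
    (huniq : ∀ a' b' a'' b'' : ℝ, IsOrbital g a' b' → IsOrbital g a'' b'' →
      a' = a'' ∧ b' = b'') :
    Supp g ⊆ Ioo a b := by
  intro x hx
  have hx01 : x ∈ Ioo (0:ℝ) 1 := by
    by_contra hc
    exact hx (hpl.2.1 x hc)
  have hF : IsClosed {y : ℝ | ap g y = y} :=
    isClosed_eq (continuous_ap hpl.1) continuous_id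
  have h0 : ap g 0 = 0 := hpl.2.1 0 (by norm_num)
  have h1 : ap g 1 = 1 := hpl.2.1 1 (by norm_num)
  set c := sSup ({y : ℝ | ap g y = y} ∩ Iic x) with hc_def
  set d := sInf ({y : ℝ | ap g y = y} ∩ Ici x) with hd_def
  have hcne : ({y : ℝ | ap g y = y} ∩ Iic x).Nonempty := ⟨0, h0, le_of_lt hx01.1⟩
  have hcbdd : BddAbove ({y : ℝ | ap g y = y} ∩ Iic x) := ⟨x, fun y hy => hy.2⟩
  have hcmem : c ∈ {y : ℝ | ap g y = y} ∩ Iic x :=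
    IsClosed.csSup_mem (hF.inter isClosed_Iic) hcne hcbdd
  have hdne : ({y : ℝ | ap g y = y} ∩ Ici x).Nonempty := ⟨1, h1, le_of_lt hx01.2⟩
  have hdbdd : BddBelow ({y : ℝ | ap g y = y} ∩ Ici x) := ⟨x, fun y hy => hy.2⟩
  have hdmem : d ∈ {y : ℝ | ap g y = y} ∩ Ici x :=
    IsClosed.csInf_mem (hF.inter isClosed_Ici) hdne hdbdd
  have hcx : c < x := lt_of_le_of_ne hcmem.2 (fun h => hx (by rw [← h]; exact hcmem.1))
  have hxd : x < d := lt_of_le_of_ne hdmem.2 (fun h => hx (by rw [h]; exact hdmem.1))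
  have horb : IsOrbital g c d := by
    refine ⟨lt_trans hcx hxd, ?_, fun h => h hcmem.1, fun h => h hdmem.1⟩
    intro y hy
    intro hyfix
    rcases le_or_gt y x with h | h
    · exact absurd (le_csSup hcbdd ⟨hyfix, h⟩) (not_le.2 hy.1)
    · exact absurd (csInf_le hdbdd ⟨hyfix, le_of_lt h⟩) (not_le.2 hy.2)
  obtain ⟨hac, hbd⟩ := huniq a b c d hab horb
  exact ⟨hac ▸ hcx, hbd ▸ hxd⟩

lemma orbital_trichotomy {g h : PermR} {a b c d : ℝ}
    (hgh : ¬ ElemsTransitionChain g h) (hhg : ¬ ElemsTransitionChain h g)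
    (hov : ¬ ElemsOneSidedOverlap g h) (hov' : ¬ ElemsOneSidedOverlap h g)
    (hne : ¬ IsOrbital h a b)
    (horb : IsOrbital g a b) (horb' : IsOrbital h c d) :
    Ioo a b ∩ Ioo c d = ∅ ∨ (c < a ∧ b < d) ∨ (a < c ∧ d < b) := by
  rcases eq_empty_or_nonempty (Ioo a b ∩ Ioo c d) with hemp | ⟨x, hx⟩
  · exact Or.inl hemp
  have hab := horb.1
  have hcd := horb'.1
  have had : a < d := lt_trans hx.1.1 hx.2.2
  have hcb : c < b := lt_trans hx.2.1 hx.1.2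
  right
  rcases lt_trichotomy a c with hac | hac | hac
  · rcases lt_trichotomy b d with hbd | hbd | hbd
    · exact absurd ⟨a, b, c, d, horb, horb', hac, hcb, hbd⟩ hgh
    · exact absurd ⟨a, b, c, hac, hcb, Or.inr ⟨horb, hbd ▸ horb'⟩⟩ hov
    · exact Or.inr ⟨hac, hbd⟩
  · rcases lt_trichotomy b d with hbd | hbd | hbd
    · exact absurd ⟨c, d, b, hcb, hbd, Or.inl ⟨hac ▸ horb', hac ▸ horb⟩⟩ hov'
    · exact absurd (by rw [hac, hbd]; exact horb') hne
    · exact absurd ⟨a, b, d, had, hbd, Or.inl ⟨horb, hac ▸ horb'⟩⟩ hov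
  · rcases lt_trichotomy b d with hbd | hbd | hbd
    · exact Or.inl ⟨hac, hbd⟩
    · exact absurd ⟨c, d, a, hac, had, Or.inr ⟨horb', hbd ▸ horb⟩⟩ hov'
    · exact absurd ⟨c, d, a, b, horb', horb, hac, had, hbd⟩ hhg

lemma conjSG_conjSG (K : Subgroup PermR) (x y : PermR) :
    ConjSG (ConjSG K x) y = ConjSG K (x * y) := by
  unfold ConjSG
  rw [Subgroup.map_map]
  have : ((MulAut.conj y⁻¹).toMonoidHom.comp (MulAut.conj x⁻¹).toMonoidHom) =
      (MulAut.conj (x * y)⁻¹).toMonoidHom := by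
    ext g
    simp [MulAut.conj_apply, mul_assoc]
  rw [this]

lemma conjSG_one (K : Subgroup PermR) : ConjSG K 1 = K := by
  unfold ConjSG
  ext g
  simp [MulAut.conj_apply]

lemma conjSG_bot (c : PermR) : ConjSG ⊥ c = ⊥ := by
  unfold ConjSG; exact Subgroup.map_bot _

lemma mem_conjSG {K : Subgroup PermR} {c x : PermR} :
    x ∈ ConjSG K c ↔ ∃ k ∈ K, c⁻¹ * k * c = x := by
  unfold ConjSG
  simp [Subgroup.mem_map, MulAut.conj_apply]

lemma conjSG_le {K W : Subgroup PermR} {c : PermR} (hK : K ≤ W) (hc : c ∈ W) :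
    ConjSG K c ≤ W := by
  intro x hx
  rcases mem_conjSG.1 hx with ⟨k, hk, rfl⟩
  exact mul_mem (mul_mem (inv_mem hc) (hK hk)) hc

lemma rj_strictMono {h : PermR} (hm : StrictMono (ap h)) {r : ℝ}
    (hr : r < ap h r) : StrictMono (fun j : ℤ => ap (h ^ j) r) := by
  apply strictMono_int_of_lt_succ
  intro n
  induction n using Int.induction_on with
  | zero =>
      simpa [ap_zpow_succ, zpow_zero, ap_one_apply] using
        (by simpa [ap_one_apply] using hr : ap ((1:PermR)) r < ap h (ap (1:PermR) r))
  | succ i ih =>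
      have := hm ih
      rw [← ap_zpow_succ, ← ap_zpow_succ] at this
      exact this
  | pred i ih =>
      have : ap h (ap (h ^ (-(i:ℤ) - 1)) r) < ap h (ap (h ^ (-(i:ℤ) - 1 + 1)) r) := by
        rw [← ap_zpow_succ, ← ap_zpow_succ]
        simpa using ih
      have h2 := hm.lt_iff_lt.1 this
      simpa using h2

lemma Ioo_seq_disjoint {f : ℤ → ℝ} (hf : StrictMono f) {i j : ℤ} (hij : i ≠ j) :
    Ioo (f i) (f (i + 1)) ∩ Ioo (f j) (f (j + 1)) = ∅ := by
  have key : ∀ i j : ℤ, i < j → ∀ p, p ∈ Ioo (f i) (f (i + 1)) →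
      p ∈ Ioo (f j) (f (j + 1)) → False := by
    intro i j hlt p hp1 hp2
    have h1 : f (i + 1) ≤ f j := hf.monotone (by omega)
    linarith [hp1.2, hp2.1]
  apply eq_empty_iff_forall_notMem.2
  rintro p ⟨hp1, hp2⟩
  rcases hij.lt_or_gt with hlt | hlt
  · exact key i j hlt p hp1 hp2
  · exact key j i hlt p hp2 hp1

-- ===================== main theorem =====================

set_option maxHeartbeats 2000000 in
theorem statement9 (Z : Set PermR) (hZfin : Z.Finite) (hZnice : IsNiceSet Z)
    (H : Subgroup PermR) (hH : H = Subgroup.closure Z)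
    (hPL : ∀ g ∈ H, IsPL g) :
    -- `H` is the internal direct sum of the subgroups `⟨h, P_h⟩`, `h ∈ Y`:
    (H = ⨆ h ∈ YSet Z, WSub Z h) ∧
    (∀ h ∈ YSet Z, ∀ h' ∈ YSet Z, h ≠ h' →
      ∀ x ∈ WSub Z h, ∀ y ∈ WSub Z h', Commute x y) ∧
    (∀ h ∈ YSet Z,
      Disjoint (WSub Z h) (⨆ h' ∈ {g | g ∈ YSet Z ∧ g ≠ h}, WSub Z h')) ∧
    -- each `⟨h, P_h⟩` is the internal wreath product `⟨P_h⟩ ≀ ℤ`, i.e. the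
    -- internal extension `(⊕_{j ∈ ℤ} ⟨P_h⟩^{h^j}) ⋊ ⟨h⟩`:
    (∀ h ∈ YSet Z, ∀ n : ℤ, h ^ n = 1 → n = 0) ∧
    (∀ h ∈ YSet Z, ∀ i j : ℤ, i ≠ j →
      ∀ x ∈ ConjSG (KSub Z h) (h ^ i), ∀ y ∈ ConjSG (KSub Z h) (h ^ j),
        Commute x y) ∧
    (∀ h ∈ YSet Z, ∀ j : ℤ,
      Disjoint (ConjSG (KSub Z h) (h ^ j))
        (⨆ i ∈ {i : ℤ | i ≠ j}, ConjSG (KSub Z h) (h ^ i))) ∧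
    (∀ h ∈ YSet Z, ∀ j : ℤ,
      ConjSG (ConjSG (KSub Z h) (h ^ j)) h = ConjSG (KSub Z h) (h ^ (j + 1))) ∧
    (∀ h ∈ YSet Z, ConjSG (NSub Z h) h = NSub Z h) ∧
    (∀ h ∈ YSet Z, Disjoint (NSub Z h) (Subgroup.zpowers h)) ∧
    (∀ h ∈ YSet Z, WSub Z h = NSub Z h ⊔ Subgroup.zpowers h) := by
  subst hH
  have hZsub : ∀ g ∈ Z, g ∈ Subgroup.closure Z := fun g hg => Subgroup.subset_closure hg
  obtain ⟨hZ0, hZ1, hZ2, hZ3⟩ := hZnice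
  have huniq : ∀ g ∈ Z, ∀ a b a' b' : ℝ, IsOrbital g a b → IsOrbital g a' b' →
      a = a' ∧ b = b' := fun g hg => (hZ0 g hg).2
  have hexo : ∀ g, g ∈ Z → ∃ p : ℝ × ℝ, IsOrbital g p.1 p.2 := by
    intro g hg; rcases (hZ0 g hg).1 with ⟨a, b, hab⟩; exact ⟨(a, b), hab⟩
  choose! ob hob using hexo
  have hPLZ : ∀ g ∈ Z, IsPL g := fun g hg => hPL g (hZsub g hg)
  have hsupp : ∀ g ∈ Z, ∀ a b : ℝ, IsOrbital g a b → Supp g ⊆ Ioo a b :=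
    fun g hg a b hab => supp_subset_orbital (hPLZ g hg) hab (huniq g hg)
  have htri : ∀ g ∈ Z, ∀ h' ∈ Z, g ≠ h' → ∀ a b c d : ℝ, IsOrbital g a b →
      IsOrbital h' c d →
      Ioo a b ∩ Ioo c d = ∅ ∨ (c < a ∧ b < d) ∨ (a < c ∧ d < b) := by
    intro g hg h' hh' hne a b c d hab hcd
    exact orbital_trichotomy (hZ1 g hg h' hh').1 (hZ1 h' hh' g hg).1
      (hZ1 g hg h' hh').2 (hZ1 h' hh' g hg).2 (hZ2 g hg h' hh' hne a b hab) hab hcd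
  have hWle : ∀ h ∈ Z, ∀ a b : ℝ, IsOrbital h a b → WSub Z h ≤ SuppSub (Ioo a b) := by
    intro h hh a b hab
    apply (Subgroup.closure_le _).2
    intro g hg
    rcases hg with hg | hg
    · have : g = h := hg
      subst this
      exact mem_suppSub.2 (hsupp g hh a b hab)
    · obtain ⟨hgZ, a0, b0, a1, b1, hab0, hgab, hss1⟩ := hg
      obtain ⟨e1, e2⟩ := huniq h hh a0 b0 a b hab0 hab
      rw [e1, e2] at hss1
      exact mem_suppSub.2 ((hsupp g hgZ a1 b1 hgab).trans hss1.1)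
  have hYdisj : ∀ h ∈ YSet Z, ∀ h' ∈ YSet Z, h ≠ h' → ∀ a b c d : ℝ,
      IsOrbital h a b → IsOrbital h' c d → Ioo a b ∩ Ioo c d = ∅ := by
    intro h hh h' hh' hne a b c d hab hcd
    rcases htri h hh.1 h' hh'.1 hne a b c d hab hcd with he | ⟨h1, h2⟩ | ⟨h1, h2⟩
    · exact he
    · exact absurd (Ioo_ssubset_strict hab.1 h1 h2) (hh.2 a b hab h' hh'.1 c d hcd)
    · exact absurd (Ioo_ssubset_strict hcd.1 h1 h2) (hh'.2 c d hcd h hh.1 a b hab)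
  -- r-data for h ∈ Y with nonempty PSet
  have hR : ∀ h ∈ YSet Z, (PSet Z h).Nonempty → ∃ r : ℝ, r < ap h r ∧
      KSub Z h ≤ SuppSub (Ioo r (ap h r)) := by
    intro h hh hP
    obtain ⟨p, hpZ, a, b, a', b', hab, h'ab, hss⟩ := hP
    obtain ⟨r, hrmem, hr3⟩ := hZ3 h hh.1 a b hab
    have hr : r < ap h r := by
      have hsub := hr3 p hpZ a' b' h'ab hss
      rcases nonempty_Ioo.2 h'ab.1 with ⟨t, ht⟩
      have ht2 := hsub ht
      exact lt_trans ht2.1 ht2.2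
    refine ⟨r, hr, ?_⟩
    apply (Subgroup.closure_le _).2
    intro g hg
    obtain ⟨hgZ, a0, b0, a1, b1, hab0, hgab, hss1⟩ := hg
    obtain ⟨e1, e2⟩ := huniq h hh.1 a0 b0 a b hab0 hab
    rw [e1, e2] at hss1
    exact mem_suppSub.2 ((hsupp g hgZ a1 b1 hgab).trans (hr3 g hgZ a1 b1 hgab hss1))
  have hIoo : ∀ h ∈ YSet Z, ∀ r : ℝ, r < ap h r →
      KSub Z h ≤ SuppSub (Ioo r (ap h r)) → ∀ j : ℤ,
      ConjSG (KSub Z h) (h ^ j) ≤ SuppSub (Ioo (ap (h ^ j) r) (ap (h ^ (j + 1)) r)) := by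
    intro h hh r hr hK j x hx
    rcases mem_conjSG.1 hx with ⟨k, hk, rfl⟩
    intro p hp
    have hq : ap (h ^ j)⁻¹ p ∈ Supp k := by
      intro hc
      apply hp
      rw [ap_mul, ap_mul, hc, ap_ap_inv]
    have hq2 := mem_suppSub.1 (hK hk) hq
    have hmj : StrictMono (ap (h ^ j)) :=
      (hPL (h ^ j) (zpow_mem (hZsub h hh.1) j)).1
    have hp1 : ap (h ^ j) r < p := by
      have := hmj hq2.1
      rwa [ap_ap_inv] at this
    have hp2 : p < ap (h ^ (j + 1)) r := by
      have := hmj hq2.2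
      rwa [ap_ap_inv, ← ap_zpow_succ'] at this
    exact ⟨hp1, hp2⟩
  have hKbot : ∀ h : PermR, PSet Z h = ∅ → KSub Z h = ⊥ := by
    intro h hP
    rw [KSub, hP, Subgroup.closure_empty]
  -- Part 1
  have part1 : Subgroup.closure Z = ⨆ h ∈ YSet Z, WSub Z h := by
    apply le_antisymm
    · apply (Subgroup.closure_le _).2
      intro z hz
      have hSfin : ({g | g ∈ Z ∧ Ioo (ob z).1 (ob z).2 ⊆ Ioo (ob g).1 (ob g).2} :
          Set PermR).Finite := hZfin.subset (fun g hg => hg.1)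
      have hSne : ({g | g ∈ Z ∧ Ioo (ob z).1 (ob z).2 ⊆ Ioo (ob g).1 (ob g).2} :
          Set PermR).Nonempty := ⟨z, hz, subset_rfl⟩
      obtain ⟨m, hmS, hmax⟩ :=
        Set.Finite.exists_maximalFor (fun g => (ob g).2 - (ob g).1) _ hSfin hSne
      have hmZ : m ∈ Z := hmS.1
      have hmorb := hob m hmZ
      have hmY : m ∈ YSet Z := by
        refine ⟨hmZ, ?_⟩
        intro a b hab h' hh' a' b' h'ab hss
        obtain ⟨ha, hb⟩ := huniq m hmZ a b (ob m).1 (ob m).2 hab hmorb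
        have hne : m ≠ h' := by
          rintro rfl
          obtain ⟨hA, hB⟩ := huniq m hmZ a b a' b' hab h'ab
          rw [hA, hB] at hss
          exact (ssubset_irrefl _) hss
        obtain ⟨ha', hb'⟩ := huniq h' hh' a' b' (ob h').1 (ob h').2 h'ab (hob h' hh')
        rcases htri m hmZ h' hh' hne a b a' b' hab h'ab with he | ⟨h1, h2⟩ | ⟨h1, h2⟩
        · rcases nonempty_Ioo.2 hab.1 with ⟨t, ht⟩
          exact absurd (mem_inter ht (hss.1 ht)) (by rw [he]; exact notMem_empty t)
        · have hsub2 : Ioo (ob m).1 (ob m).2 ⊆ Ioo (ob h').1 (ob h').2 := by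
            rw [← ha, ← hb, ← ha', ← hb']
            exact Ioo_subset_Ioo h1.le h2.le
          have hle : (ob m).2 - (ob m).1 ≤ (ob h').2 - (ob h').1 := by
            rw [← ha, ← hb, ← ha', ← hb']
            linarith
          have heq : (ob h').2 - (ob h').1 ≤ (ob m).2 - (ob m).1 := @hmax h' ⟨hh', hmS.2.trans hsub2⟩ hle
          rw [← ha, ← hb, ← ha', ← hb'] at heq
          linarith
        · have hsub3 : Ioo a' b' ⊆ Ioo a b := Ioo_subset_Ioo h1.le h2.le
          exact (lt_irrefl _) (lt_of_lt_of_le hss hsub3)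
      have hzW : z ∈ WSub Z m := by
        by_cases hzm : z = m
        · exact Subgroup.subset_closure (Or.inl (by rw [hzm]; rfl))
        · apply Subgroup.subset_closure
          right
          refine ⟨hz, (ob m).1, (ob m).2, (ob z).1, (ob z).2, hmorb, hob z hz, ?_⟩
          refine lt_of_le_of_ne hmS.2 (fun he => ?_)
          obtain ⟨h1, h2⟩ := Ioo_eq_endpoints he (hob z hz).1
          exact hZ2 z hz m hmZ hzm _ _ (hob z hz) (by rw [← h1, ← h2] at hmorb; exact hmorb)
      exact SetLike.le_def.1 (le_iSup₂ (f := fun h _ => WSub Z h) m hmY) hzW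
    · refine iSup_le fun h => iSup_le fun hh => ?_
      apply Subgroup.closure_mono
      rintro g (hg | hg)
      · have : g = h := hg
        rw [this]; exact hh.1
      · exact hg.1
  -- Part 2
  have part2 : ∀ h ∈ YSet Z, ∀ h' ∈ YSet Z, h ≠ h' →
      ∀ x ∈ WSub Z h, ∀ y ∈ WSub Z h', Commute x y := by
    intro h hh h' hh' hne x hx y hy
    apply commute_of_disjoint_supp
    have h1 := mem_suppSub.1 (hWle h hh.1 _ _ (hob h hh.1) hx)
    have h2 := mem_suppSub.1 (hWle h' hh'.1 _ _ (hob h' hh'.1) hy)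
    have hd := hYdisj h hh h' hh' hne _ _ _ _ (hob h hh.1) (hob h' hh'.1)
    exact subset_empty_iff.1 (hd ▸ inter_subset_inter h1 h2)
  -- Part 3
  have part3 : ∀ h ∈ YSet Z,
      Disjoint (WSub Z h) (⨆ h' ∈ {g | g ∈ YSet Z ∧ g ≠ h}, WSub Z h') := by
    intro h hh
    rw [Subgroup.disjoint_def]
    intro x hx hx'
    have hle : (⨆ h' ∈ {g | g ∈ YSet Z ∧ g ≠ h}, WSub Z h') ≤
        SuppSub (⋃ h' ∈ {g | g ∈ YSet Z ∧ g ≠ h}, Ioo (ob h').1 (ob h').2) := by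
      refine iSup_le fun h' => iSup_le fun hh' => ?_
      exact (hWle h' hh'.1.1 _ _ (hob h' hh'.1.1)).trans
        (suppSub_mono (subset_biUnion_of_mem (u := fun g => Ioo (ob g).1 (ob g).2) hh'))
    have h1 := mem_suppSub.1 (hWle h hh.1 _ _ (hob h hh.1) hx)
    have h2 := mem_suppSub.1 (hle hx')
    apply eq_one_of_fixes
    intro p
    by_contra hp
    have hp1 := h1 hp
    obtain ⟨h', hh', hph'⟩ := mem_iUnion₂.1 (h2 hp)
    have hd := hYdisj h' hh'.1 h hh hh'.2 _ _ _ _ (hob h' hh'.1.1) (hob h hh.1)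
    exact absurd (mem_inter hph' hp1) (by rw [hd]; exact notMem_empty p)
  -- Part 4
  have part4 : ∀ h ∈ YSet Z, ∀ n : ℤ, h ^ n = 1 → n = 0 := by
    intro h hh n hn
    have horb := hob h hh.1
    have hm : StrictMono (ap h) := (hPLZ h hh.1).1
    rcases nonempty_Ioo.2 horb.1 with ⟨t, ht⟩
    have htm : ap h t ≠ t := horb.2.1 ht
    have key : ∀ g : PermR, StrictMono (ap g) → ∀ r : ℝ, r < ap g r → g ^ n = 1 →
        n = 0 := by
      intro g hg r hr hgn
      have hmono := rj_strictMono hg hr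
      have heq : ap (g ^ n) r = ap (g ^ (0:ℤ)) r := by
        rw [hgn, zpow_zero]
      exact hmono.injective heq
    rcases htm.lt_or_gt with hlt | hlt
    · have hminv : StrictMono (ap h⁻¹) := (hPL h⁻¹ (inv_mem (hZsub h hh.1))).1
      have ht2 : t < ap h⁻¹ t := by
        have := hminv hlt
        rwa [ap_inv_ap] at this
      exact key h⁻¹ hminv t ht2 (by rw [inv_zpow, hn, inv_one])
    · exact key h hm t hlt hn
  -- Part 5
  have part5 : ∀ h ∈ YSet Z, ∀ i j : ℤ, i ≠ j →
      ∀ x ∈ ConjSG (KSub Z h) (h ^ i), ∀ y ∈ ConjSG (KSub Z h) (h ^ j),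
      Commute x y := by
    intro h hh i j hij x hx y hy
    rcases eq_empty_or_nonempty (PSet Z h) with hP | hP
    · rw [hKbot h hP, conjSG_bot, Subgroup.mem_bot] at hx
      rw [hx]; exact Commute.one_left y
    · obtain ⟨r, hr, hKle⟩ := hR h hh hP
      have hm : StrictMono (ap h) := (hPLZ h hh.1).1
      have hrj := rj_strictMono hm hr
      apply commute_of_disjoint_supp
      have h1 := mem_suppSub.1 (hIoo h hh r hr hKle i hx)
      have h2 := mem_suppSub.1 (hIoo h hh r hr hKle j hy)
      have hd := Ioo_seq_disjoint hrj hij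
      exact subset_empty_iff.1 (hd ▸ inter_subset_inter h1 h2)
  -- Part 6
  have part6 : ∀ h ∈ YSet Z, ∀ j : ℤ,
      Disjoint (ConjSG (KSub Z h) (h ^ j))
        (⨆ i ∈ {i : ℤ | i ≠ j}, ConjSG (KSub Z h) (h ^ i)) := by
    intro h hh j
    rcases eq_empty_or_nonempty (PSet Z h) with hP | hP
    · rw [hKbot h hP, conjSG_bot]
      exact disjoint_bot_left
    · obtain ⟨r, hr, hKle⟩ := hR h hh hP
      have hm : StrictMono (ap h) := (hPLZ h hh.1).1
      have hrj := rj_strictMono hm hr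
      rw [Subgroup.disjoint_def]
      intro x hx hx'
      have hle : (⨆ i ∈ {i : ℤ | i ≠ j}, ConjSG (KSub Z h) (h ^ i)) ≤
          SuppSub (⋃ i ∈ {i : ℤ | i ≠ j}, Ioo (ap (h ^ i) r) (ap (h ^ (i + 1)) r)) := by
        refine iSup_le fun i => iSup_le fun hi => ?_
        exact (hIoo h hh r hr hKle i).trans (suppSub_mono (subset_biUnion_of_mem (u := fun i => Ioo (ap (h ^ i) r) (ap (h ^ (i + 1)) r)) hi))
      have h1 := mem_suppSub.1 (hIoo h hh r hr hKle j hx)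
      have h2 := mem_suppSub.1 (hle hx')
      apply eq_one_of_fixes
      intro p
      by_contra hp
      have hpj := h1 hp
      obtain ⟨i, hi, hpi⟩ := mem_iUnion₂.1 (h2 hp)
      have hd := Ioo_seq_disjoint hrj (hi : i ≠ j)
      exact absurd (mem_inter hpi hpj) (by rw [hd]; exact notMem_empty p)
  -- Part 7
  have part7 : ∀ h ∈ YSet Z, ∀ j : ℤ,
      ConjSG (ConjSG (KSub Z h) (h ^ j)) h = ConjSG (KSub Z h) (h ^ (j + 1)) := by
    intro h _ j
    rw [conjSG_conjSG, ← zpow_add_one]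
  -- Part 8
  have part8 : ∀ h ∈ YSet Z, ConjSG (NSub Z h) h = NSub Z h := by
    intro h hh
    have step1 : ConjSG (NSub Z h) h =
        ⨆ j : ℤ, ConjSG (ConjSG (KSub Z h) (h ^ j)) h := by
      rw [NSub]
      simp only [ConjSG]
      exact Subgroup.map_iSup _ _
    rw [step1]
    have step2 : (⨆ j : ℤ, ConjSG (ConjSG (KSub Z h) (h ^ j)) h) =
        ⨆ j : ℤ, ConjSG (KSub Z h) (h ^ (j + 1)) :=
      iSup_congr fun j => part7 h hh j
    rw [step2, NSub]
    apply le_antisymm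
    · exact iSup_le fun j => le_iSup (fun i : ℤ => ConjSG (KSub Z h) (h ^ i)) (j + 1)
    · refine iSup_le fun j => le_iSup_of_le (j - 1) (le_of_eq ?_)
      rw [sub_add_cancel]
  -- Part 9
  have part9 : ∀ h ∈ YSet Z, Disjoint (NSub Z h) (Subgroup.zpowers h) := by
    intro h hh
    rcases eq_empty_or_nonempty (PSet Z h) with hP | hP
    · have : NSub Z h = ⊥ := by
        rw [NSub]
        simp [hKbot h hP, conjSG_bot]
      rw [this]
      exact disjoint_bot_left
    · obtain ⟨r, hr, hKle⟩ := hR h hh hP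
      have hm : StrictMono (ap h) := (hPLZ h hh.1).1
      have hrj := rj_strictMono hm hr
      have hf0 : ap (h ^ (0:ℤ)) r = r := by rw [zpow_zero]; rfl
      rw [Subgroup.disjoint_def]
      intro x hx hx'
      obtain ⟨n, rfl⟩ := hx'
      have hle : NSub Z h ≤ SuppSub (⋃ j : ℤ, Ioo (ap (h ^ j) r) (ap (h ^ (j + 1)) r)) := by
        rw [NSub]
        refine iSup_le fun jj => ?_
        exact (hIoo h hh r hr hKle jj).trans (suppSub_mono (subset_iUnion (fun j : ℤ => Ioo (ap (h ^ j) r) (ap (h ^ (j + 1)) r)) jj))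
      have hrU : r ∉ ⋃ j : ℤ, Ioo (ap (h ^ j) r) (ap (h ^ (j + 1)) r) := by
        rw [mem_iUnion]
        rintro ⟨jj, hjj⟩
        have e1 : jj < 0 := by
          have := hrj.lt_iff_lt.1 (show ap (h ^ jj) r < ap (h ^ (0:ℤ)) r from by
            rw [hf0]; exact hjj.1)
          omega
        have e2 : (0:ℤ) < jj + 1 := by
          have := hrj.lt_iff_lt.1 (show ap (h ^ (0:ℤ)) r < ap (h ^ (jj + 1)) r from by
            rw [hf0]; exact hjj.2)
          omega
        omega
      have hfix : ap (h ^ n) r = r := by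
        by_contra hc
        exact hrU (mem_suppSub.1 (hle hx) hc)
      have hn0 : n = 0 := by
        apply hrj.injective
        show ap (h ^ n) r = ap (h ^ (0:ℤ)) r
        rw [hfix, hf0]
      show h ^ n = 1
      rw [hn0, zpow_zero]
  -- Part 10
  have part10 : ∀ h ∈ YSet Z, WSub Z h = NSub Z h ⊔ Subgroup.zpowers h := by
    intro h hh
    apply le_antisymm
    · rw [WSub]
      apply (Subgroup.closure_le _).2
      rintro g (hg | hg)
      · have hgh : g = h := hg
        rw [hgh]
        exact SetLike.le_def.1 le_sup_right (Subgroup.mem_zpowers h)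
      · have h1 : g ∈ KSub Z h := Subgroup.subset_closure hg
        have h2 : KSub Z h ≤ NSub Z h := by
          have e : KSub Z h = ConjSG (KSub Z h) (h ^ (0:ℤ)) := by
            rw [zpow_zero, conjSG_one]
          refine le_trans (le_of_eq e) ?_
          show ConjSG (KSub Z h) (h ^ (0:ℤ)) ≤ ⨆ j : ℤ, ConjSG (KSub Z h) (h ^ j)
          exact le_iSup (fun j : ℤ => ConjSG (KSub Z h) (h ^ j)) 0
        exact SetLike.le_def.1 (h2.trans le_sup_left) h1
    · apply sup_le
      · rw [NSub]
        refine iSup_le fun j => conjSG_le ?_ ?_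
        · rw [KSub, WSub]
          exact Subgroup.closure_mono subset_union_right
        · have hhW : h ∈ WSub Z h := Subgroup.subset_closure (Set.mem_union_left _ (mem_singleton h))
          exact zpow_mem hhW j
      · rw [Subgroup.zpowers_eq_closure, WSub]
        exact Subgroup.closure_mono (fun t ht => Or.inl ht)
  exact ⟨part1, part2, part3, part4, part5, part6, part7, part8, part9, part10⟩

end PLPaper
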